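/- Let n ≥ 2 and let L be the n×n matrix over 𝔽₂ whose first column has all entries equal to 1, with L[i][i+1] = 1 for 0 ≤ i ≤ n−2 and all other entries 0. Then the characteristic polynomial of L equals xⁿ + xⁿ⁻¹ + ⋯ + x + 1 = ∑_{j=0}^{n} xʲ. -/

import Mathlib

open Matrix Polynomial

noncomputable def Mm (n : ℕ) : Matrix (Fin n) (Fin n) (Polynomial (ZMod 2)) :=
  fun i j => (if i = j then X else 0) +
    (if (j : ℕ) = 0 then 1 else if (i : ℕ) + 1 = (j : ℕ) then 1 else 0)

lemma detB (m : ℕ) : (((Mm (m + 2)).submatrix (⟨m, by omega⟩ : Fin (m+2)).succAbove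
    (Fin.last (m + 1)).succAbove)).det = 1 := by
  set i₀ : Fin (m + 2) := ⟨m, by omega⟩ with hi₀
  rw [Fin.succAbove_last]
  set B := (Mm (m + 2)).submatrix i₀.succAbove Fin.castSucc with hBdef
  have hrowlast : ∀ b : Fin (m + 1), B (Fin.last m) b = if b = 0 then 1 else 0 := by
    intro b
    have h1 : i₀.succAbove (Fin.last m) = Fin.last (m + 1) := by
      rw [Fin.succAbove_of_le_castSucc _ _ (by simp [hi₀, Fin.le_def])]
      apply Fin.ext; simp
    have hblt := b.isLt
    simp only [hBdef, Matrix.submatrix_apply, h1, Mm]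
    have hne : ¬ ((Fin.last (m + 1) : Fin (m + 2)) = Fin.castSucc b) := by
      simp [Fin.ext_iff]; omega
    rw [if_neg hne, zero_add]
    simp only [Fin.coe_castSucc, Fin.val_last, Fin.ext_iff, Fin.val_zero]
    split_ifs with hb0 hb1 <;> first | rfl | omega
  rw [Matrix.det_succ_row B (Fin.last m)]
  simp only [CharTwo.neg_eq, one_pow, one_mul]
  rw [Fintype.sum_eq_single (0 : Fin (m + 1))
    (by intro b hb; rw [hrowlast b, if_neg hb, zero_mul])]
  rw [hrowlast 0, if_pos rfl, one_mul]
  set C := B.submatrix (Fin.last m).succAbove (0 : Fin (m + 1)).succAbove with hCdef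
  have hC : ∀ a b : Fin m, C a b =
      (if (a : ℕ) = (b : ℕ) + 1 then X else 0) + (if a = b then 1 else 0) := by
    intro a b
    have h1 : i₀.succAbove (Fin.castSucc a) = Fin.castSucc (Fin.castSucc a) :=
      Fin.succAbove_of_castSucc_lt _ _ (by simp [hi₀, Fin.lt_def, a.isLt])
    simp only [hCdef, hBdef, Matrix.submatrix_apply, Fin.succAbove_last, Fin.zero_succAbove, h1, Mm]
    congr 1
    · simp [Fin.ext_iff]
    · have h2 : ¬ (((Fin.castSucc (Fin.succ b) : Fin (m + 2)) : ℕ) = 0) := by simp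
      rw [if_neg h2]
      simp [Fin.ext_iff]
  have htri : C.BlockTriangular OrderDual.toDual := by
    intro i j h
    have hij : i < j := h
    have hij' : (i : ℕ) < (j : ℕ) := hij
    rw [hC i j, if_neg (by omega), if_neg (Fin.ne_of_lt hij)]
    simp
  rw [Matrix.det_of_lowerTriangular C htri]
  apply Finset.prod_eq_one
  intro a _
  rw [hC a a, if_neg (by omega), if_pos rfl, zero_add]

lemma detMm : ∀ n : ℕ, (Mm n).det = ∑ j ∈ Finset.range (n + 1), (X : (ZMod 2)[X]) ^ j := by
  intro n
  induction n with
  | zero => simp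
  | succ n ih =>
    rcases n with _ | m
    · rw [Matrix.det_fin_one]
      simp [Mm, Finset.sum_range_succ, add_comm]
    · set i₀ : Fin (m + 2) := ⟨m, by omega⟩ with hi₀
      rw [Matrix.det_succ_column (Mm (m + 2)) (Fin.last (m + 1))]
      simp only [CharTwo.neg_eq, one_pow, one_mul]
      rw [Fintype.sum_eq_add i₀ (Fin.last (m + 1))
        (by simp [hi₀, Fin.ext_iff])
        (by
          rintro x ⟨hx0, hx1⟩
          have h2 : ¬ ((x : ℕ) = m) := fun h => hx0 (by simp [hi₀, Fin.ext_iff, h])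
          simp [Mm, hx1, h2])]
      have e1 : Mm (m + 2) (Fin.last (m + 1)) (Fin.last (m + 1)) = X := by
        simp [Mm]
      have e0 : Mm (m + 2) i₀ (Fin.last (m + 1)) = 1 := by
        have h : ¬ i₀ = Fin.last (m + 1) := by simp [hi₀, Fin.ext_iff]
        simp [Mm, h, hi₀, Fin.ext_iff]
      have hlast : (Mm (m + 2)).submatrix (Fin.last (m + 1)).succAbove
          (Fin.last (m + 1)).succAbove = Mm (m + 1) := by
        ext a b
        simp [Mm, Fin.succAbove_last, Fin.castSucc_inj]
      rw [e0, e1, hlast, ih, one_mul, detB m]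
      conv_rhs => rw [geom_sum_succ]
      rw [add_comm]

theorem stmt1 (n : ℕ) (hn : 2 ≤ n)
    (L : Matrix (Fin n) (Fin n) (ZMod 2))
    (hL : ∀ i j : Fin n, L i j =
      if (j : ℕ) = 0 then 1
      else if (i : ℕ) + 1 = (j : ℕ) then 1 else 0) :
    L.charpoly = ∑ j ∈ Finset.range (n + 1), (X : (ZMod 2)[X]) ^ j := by
  have hM : charmatrix L = Mm n := by
    ext i j
    rcases eq_or_ne i j with rfl | h
    · rw [charmatrix_apply_eq, hL, CharTwo.sub_eq_add]
      simp [Mm, apply_ite (C : ZMod 2 → (ZMod 2)[X])]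
    · rw [charmatrix_apply_ne _ _ _ h, hL, CharTwo.neg_eq]
      simp [Mm, h, apply_ite (C : ZMod 2 → (ZMod 2)[X])]
  rw [Matrix.charpoly, hM, detMm n]
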